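/- arXiv:0706.3742 — 2 statements merged into one kernel-verified Lean document; each statement's English description precedes it below -/
import Mathlib

section
/- As formal power series (or for |q| < 1), Σ_{m≥0} (-z)^m q^{m(m-1)/2} / (q;q)_m = (z;q)_∞. -/
open scoped BigOperators

/-- The finite q-Pochhammer symbol `(a;q)_n`. -/
noncomputable def qPoch (a q : ℂ) : ℕ → ℂ
  | 0 => 1
  | n + 1 => qPoch a q n * (1 - a * q ^ n)

/-- The infinite q-Pochhammer symbol `(a;q)_∞`. -/
noncomputable def qPochInf (a q : ℂ) : ℂ := ∏' i : ℕ, (1 - a * q ^ i)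

noncomputable def eulerC (q : ℂ) (m : ℕ) : ℂ := (-1) ^ m * q ^ m.choose 2 / qPoch q q m

lemma qPoch_succ (a q : ℂ) (n : ℕ) : qPoch a q (n + 1) = qPoch a q n * (1 - a * q ^ n) := rfl

lemma one_sub_pow_ne_zero {q : ℂ} (hq : ‖q‖ < 1) (n : ℕ) : (1 : ℂ) - q * q ^ n ≠ 0 := by
  intro h
  have h1 : q * q ^ n = 1 := by linear_combination -h
  have h2 : ‖q * q ^ n‖ < 1 := by
    rw [norm_mul, norm_pow]
    have h3 : ‖q‖ ^ n ≤ 1 := pow_le_one₀ (norm_nonneg q) hq.le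
    nlinarith [norm_nonneg q, pow_nonneg (norm_nonneg q) n]
  rw [h1] at h2
  simp at h2

lemma qPoch_ne_zero {q : ℂ} (hq : ‖q‖ < 1) (m : ℕ) : qPoch q q m ≠ 0 := by
  induction m with
  | zero => simp [qPoch]
  | succ n ih => exact mul_ne_zero ih (one_sub_pow_ne_zero hq n)

lemma eulerC_zero (q : ℂ) : eulerC q 0 = 1 := by simp [eulerC, qPoch]

lemma eulerC_rec {q : ℂ} (hq : ‖q‖ < 1) (m : ℕ) :
    eulerC q (m + 1) * (1 - q ^ (m + 1)) = -q ^ m * eulerC q m := by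
  have hP := qPoch_ne_zero hq m
  have hP1 := qPoch_ne_zero hq (m + 1)
  have hchoose : (m + 1).choose 2 = m.choose 2 + m := by
    rw [Nat.choose_succ_succ]
    simp [Nat.choose_one_right, Nat.add_comm]
  have hps : qPoch q q (m + 1) = qPoch q q m * (1 - q ^ (m + 1)) := by
    rw [qPoch_succ, pow_succ']
  have hfac : (1 : ℂ) - q ^ (m + 1) ≠ 0 := by
    have := one_sub_pow_ne_zero hq m
    rwa [← pow_succ'] at this
  rw [eulerC, eulerC, hchoose, hps]
  field_simp
  ring

open Filter in
lemma summable_norm_eulerC {q : ℂ} (hq : ‖q‖ < 1) (z : ℂ) :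
    Summable (fun m => ‖eulerC q m * z ^ m‖) := by
  have h1q : (0:ℝ) < 1 - ‖q‖ := by linarith
  apply summable_of_ratio_norm_eventually_le (r := 1/2) (by norm_num)
  have ht : Tendsto (fun m => ‖q‖ ^ m * ‖z‖) atTop (nhds 0) := by
    simpa using (tendsto_pow_atTop_nhds_zero_of_lt_one (norm_nonneg q) hq).mul_const ‖z‖
  have hev : ∀ᶠ m in atTop, ‖q‖ ^ m * ‖z‖ ≤ (1 - ‖q‖)/2 :=
    (ht.eventually_lt_const (by positivity)).mono fun m hm => hm.le
  filter_upwards [hev] with m hm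
  rw [Real.norm_of_nonneg (norm_nonneg _), Real.norm_of_nonneg (norm_nonneg _)]
  have key : eulerC q (m+1) * z^(m+1) * (1 - q^(m+1)) = -q^m * eulerC q m * z^(m+1) := by
    have h := eulerC_rec hq m
    linear_combination z^(m+1) * h
  have hnorm : ‖eulerC q (m+1) * z^(m+1)‖ * ‖(1:ℂ) - q^(m+1)‖
      = (‖q‖^m * ‖z‖) * ‖eulerC q m * z^m‖ := by
    rw [← norm_mul, key]
    simp only [norm_mul, norm_neg, norm_pow, pow_succ]
    ring
  have hlb : 1 - ‖q‖ ≤ ‖(1:ℂ) - q^(m+1)‖ := by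
    have h2 := norm_sub_norm_le (1:ℂ) (q^(m+1))
    have h3 : ‖q‖^(m+1) ≤ ‖q‖ := pow_le_of_le_one (norm_nonneg q) hq.le (Nat.succ_ne_zero m)
    simp only [norm_one, norm_pow] at h2
    linarith
  have hA := norm_nonneg (eulerC q (m+1) * z^(m+1))
  have hB := norm_nonneg (eulerC q m * z^m)
  nlinarith [mul_le_mul_of_nonneg_right hm hB,
    mul_le_mul_of_nonneg_left hlb hA]

noncomputable def eulerF (q z : ℂ) : ℂ := ∑' m : ℕ, eulerC q m * z ^ m

lemma summable_eulerC {q : ℂ} (hq : ‖q‖ < 1) (z : ℂ) :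
    Summable (fun m => eulerC q m * z ^ m) :=
  (summable_norm_eulerC hq z).of_norm

lemma eulerF_funcEq {q : ℂ} (hq : ‖q‖ < 1) (z : ℂ) :
    eulerF q z = (1 - z) * eulerF q (q * z) := by
  have hs1 := summable_eulerC hq z
  have hs2 := summable_eulerC hq (q * z)
  have hg : ∀ m : ℕ, eulerC q m * (1 - q ^ m) * z ^ m
      = eulerC q m * z ^ m - eulerC q m * (q * z) ^ m := by
    intro m; rw [mul_pow]; ring
  have hsg : Summable (fun m => eulerC q m * (1 - q ^ m) * z ^ m) := by
    simp only [hg]; exact hs1.sub hs2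
  have h1 : eulerF q z - eulerF q (q * z) = ∑' m : ℕ, eulerC q m * (1 - q ^ m) * z ^ m := by
    rw [eulerF, eulerF, ← Summable.tsum_sub hs1 hs2]
    exact tsum_congr fun m => (hg m).symm
  have h2 : ∑' m : ℕ, eulerC q m * (1 - q ^ m) * z ^ m
      = ∑' m : ℕ, eulerC q (m + 1) * (1 - q ^ (m + 1)) * z ^ (m + 1) := by
    rw [Summable.tsum_eq_zero_add hsg]; simp
  have h3 : ∀ m : ℕ, eulerC q (m + 1) * (1 - q ^ (m + 1)) * z ^ (m + 1)
      = -z * (eulerC q m * (q * z) ^ m) := by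
    intro m
    have h := eulerC_rec hq m
    rw [mul_pow]
    linear_combination z ^ (m + 1) * h
  have h4 : eulerF q z - eulerF q (q * z) = -z * eulerF q (q * z) := by
    rw [h1, h2, tsum_congr h3, tsum_mul_left, eulerF]
  linear_combination h4

lemma eulerF_iter {q : ℂ} (hq : ‖q‖ < 1) (z : ℂ) (n : ℕ) :
    eulerF q z = qPoch z q n * eulerF q (q ^ n * z) := by
  induction n with
  | zero => simp [qPoch]
  | succ n ih =>
    rw [ih, qPoch_succ, eulerF_funcEq hq (q ^ n * z),
      show q * (q ^ n * z) = q ^ (n + 1) * z by ring]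
    ring

lemma qPoch_eq_prod (a q : ℂ) (n : ℕ) :
    qPoch a q n = ∏ i ∈ Finset.range n, (1 - a * q ^ i) := by
  induction n with
  | zero => simp [qPoch]
  | succ n ih => rw [qPoch_succ, ih, Finset.prod_range_succ]

open Filter in
lemma multipliable_qPochInf {q : ℂ} (hq : ‖q‖ < 1) (z : ℂ) :
    Multipliable (fun i : ℕ => 1 - z * q ^ i) := by
  by_cases hz : ∃ i : ℕ, (1 : ℂ) - z * q ^ i = 0
  · obtain ⟨i0, hi0⟩ := hz
    refine ⟨0, ?_⟩
    rw [HasProd]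
    apply Tendsto.congr' _ tendsto_const_nhds
    filter_upwards [eventually_ge_atTop ({i0} : Finset ℕ)] with s hs
    exact (Finset.prod_eq_zero (hs (Finset.mem_singleton_self i0)) hi0).symm
  · push_neg at hz
    have hlog : Summable (fun i : ℕ => Complex.log (1 - z * q ^ i)) := by
      apply Summable.of_norm_bounded_eventually (g := fun i => 2 * (‖z‖ * ‖q‖ ^ i))
      · exact ((summable_geometric_of_lt_one (norm_nonneg q) hq).mul_left ‖z‖).mul_left 2
      · rw [Nat.cofinite_eq_atTop]
        have ht : Tendsto (fun i => ‖z‖ * ‖q‖ ^ i) atTop (nhds 0) := by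
          simpa using (tendsto_pow_atTop_nhds_zero_of_lt_one (norm_nonneg q) hq).const_mul ‖z‖
        filter_upwards [ht.eventually_lt_const (show (0:ℝ) < 1/2 by norm_num)] with i hi
        have hzq : ‖-(z * q ^ i)‖ ≤ 1/2 := by
          rw [norm_neg, norm_mul, norm_pow]; exact hi.le
        have := Complex.norm_log_one_add_half_le_self hzq
        rw [← sub_eq_add_neg] at this
        calc ‖Complex.log (1 - z * q ^ i)‖ ≤ 3/2 * ‖-(z * q ^ i)‖ := this
          _ ≤ 2 * (‖z‖ * ‖q‖ ^ i) := by
              rw [norm_neg, norm_mul, norm_pow]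
              nlinarith [norm_nonneg z, pow_nonneg (norm_nonneg q) i]
    exact Complex.multipliable_of_summable_log hlog

open Filter in
lemma tendsto_qPoch {q : ℂ} (hq : ‖q‖ < 1) (z : ℂ) :
    Tendsto (fun n => qPoch z q n) atTop (nhds (qPochInf z q)) := by
  have h := (multipliable_qPochInf hq z).hasProd.tendsto_prod_nat
  apply h.congr
  intro n
  exact (qPoch_eq_prod z q n).symm

open Filter in
lemma tendsto_eulerF {q : ℂ} (hq : ‖q‖ < 1) (z : ℂ) :
    Tendsto (fun n => eulerF q (q ^ n * z)) atTop (nhds 1) := by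
  set S : ℝ := ∑' m : ℕ, ‖eulerC q (m + 1) * z ^ (m + 1)‖ with hS
  have hSsum : Summable (fun m : ℕ => ‖eulerC q (m + 1) * z ^ (m + 1)‖) :=
    (summable_nat_add_iff (f := fun m : ℕ => ‖eulerC q m * z ^ m‖) 1).mpr
      (summable_norm_eulerC hq z)
  have hbound : ∀ n : ℕ, ‖eulerF q (q ^ n * z) - 1‖ ≤ ‖q‖ ^ n * S := by
    intro n
    set w : ℂ := q ^ n * z with hw
    have hsw : Summable (fun m : ℕ => ‖eulerC q (m + 1) * w ^ (m + 1)‖) :=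
      (summable_nat_add_iff (f := fun m : ℕ => ‖eulerC q m * w ^ m‖) 1).mpr
      (summable_norm_eulerC hq w)
    have h0 : eulerF q w - 1 = ∑' m : ℕ, eulerC q (m + 1) * w ^ (m + 1) := by
      rw [eulerF, Summable.tsum_eq_zero_add (summable_eulerC hq w), eulerC_zero]
      ring
    rw [h0]
    calc ‖∑' m : ℕ, eulerC q (m + 1) * w ^ (m + 1)‖
        ≤ ∑' m : ℕ, ‖eulerC q (m + 1) * w ^ (m + 1)‖ := norm_tsum_le_tsum_norm hsw
      _ ≤ ∑' m : ℕ, ‖q‖ ^ n * ‖eulerC q (m + 1) * z ^ (m + 1)‖ := by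
          apply Summable.tsum_le_tsum _ hsw (hSsum.mul_left _)
          intro m
          have : eulerC q (m + 1) * w ^ (m + 1) = (q ^ n) ^ (m + 1) * (eulerC q (m + 1) * z ^ (m + 1)) := by
            rw [hw, mul_pow]; ring
          rw [this, norm_mul, norm_pow, norm_pow]
          have hle : (‖q‖ ^ n) ^ (m + 1) ≤ ‖q‖ ^ n := by
            apply pow_le_of_le_one (by positivity) (pow_le_one₀ (norm_nonneg q) hq.le)
              (Nat.succ_ne_zero m)
          exact mul_le_mul_of_nonneg_right hle (norm_nonneg _)
      _ = ‖q‖ ^ n * S := tsum_mul_left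
  rw [tendsto_iff_norm_sub_tendsto_zero]
  apply squeeze_zero (fun n => norm_nonneg _) hbound
  simpa using (tendsto_pow_atTop_nhds_zero_of_lt_one (norm_nonneg q) hq).mul_const S

open Filter in
/-- Euler's identity (the q-exponential expansion). -/
theorem stmt1 (q z : ℂ) (hq : ‖q‖ < 1) :
    ∑' m : ℕ, (-z) ^ m * q ^ (m * (m - 1) / 2) / qPoch q q m = qPochInf z q := by
  have hFz : eulerF q z = qPochInf z q := by
    have h1 : Tendsto (fun n => qPoch z q n * eulerF q (q ^ n * z)) atTop
        (nhds (qPochInf z q * 1)) := (tendsto_qPoch hq z).mul (tendsto_eulerF hq z)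
    have h2 : Tendsto (fun _ : ℕ => eulerF q z) atTop (nhds (eulerF q z)) :=
      tendsto_const_nhds
    rw [← mul_one (qPochInf z q)]
    exact tendsto_nhds_unique (h2.congr fun n => eulerF_iter hq z n) h1
  rw [← hFz, eulerF]
  apply tsum_congr
  intro m
  rw [eulerC, ← Nat.choose_two_right, neg_pow]
  ring
end

section
/- For nonnegative integers i ≤ l, the sum over partitions λ of length at most l of q^{|λ|} t^{λ_i} equals 1 / ((1-q)···(1-q^{i-1}) · (1-q^i t)···(1-q^l t)). -/
open scoped BigOperators

set_option maxHeartbeats 1000000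

/-- Partitions with at most `l` parts, written as weakly decreasing
tuples of nonnegative integers of length `l`. -/
def PartLe (l : ℕ) : Type :=
  {f : Fin l → ℕ // ∀ i j : Fin l, i ≤ j → f j ≤ f i}

lemma telescopeAux (g : ℕ → ℕ) (hg : ∀ m, g (m+1) ≤ g m) (a : ℕ) :
    ∀ b, a ≤ b → ∑ m ∈ Finset.Ico a b, (g m - g (m+1)) = g a - g b := by
  have hanti : Antitone g := antitone_nat_of_succ_le hg
  intro b
  induction b with
  | zero => intro h; interval_cases a; simp
  | succ b ih =>
    intro hab
    rcases Nat.lt_or_ge a (b+1) with h | h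
    · have hab' : a ≤ b := by omega
      rw [Finset.sum_Ico_succ_top hab', ih hab']
      have h1 := hanti hab'
      have h2 := hg b
      omega
    · have : a = b+1 := by omega
      subst this; simp

def partExt {l : ℕ} (p : PartLe l) (m : ℕ) : ℕ :=
  if h : m < l then p.1 ⟨m, h⟩ else 0

lemma partExt_succ_le {l : ℕ} (p : PartLe l) (m : ℕ) :
    partExt p (m+1) ≤ partExt p m := by
  unfold partExt
  split_ifs with h1 h2 h2
  · exact p.2 ⟨m, h2⟩ ⟨m+1, h1⟩ (by simp [Fin.le_def])
  · omega
  · exact Nat.zero_le _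
  · exact Nat.zero_le _

def partEquiv (l : ℕ) : (Fin l → ℕ) ≃ PartLe l where
  toFun d := ⟨fun j => ∑ k ∈ Finset.Ici j, d k, by
    intro a b hab
    exact Finset.sum_le_sum_of_subset (Finset.Ici_subset_Ici.mpr hab)⟩
  invFun p := fun k => partExt p k - partExt p (k.val+1)
  left_inv d := by
    funext k
    show partExt _ k.val - partExt _ (k.val+1) = d k
    have hk : (k : ℕ) < l := k.isLt
    rcases Nat.lt_or_ge (k.val+1) l with h | h
    · rw [show partExt (⟨fun j => ∑ k ∈ Finset.Ici j, d k, fun a b hab => Finset.sum_le_sum_of_subset (Finset.Ici_subset_Ici.mpr hab)⟩ : PartLe l) k.val = ∑ m ∈ Finset.Ici k, d m from by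
            simp only [partExt, dif_pos hk],
          show partExt (⟨fun j => ∑ k ∈ Finset.Ici j, d k, fun a b hab => Finset.sum_le_sum_of_subset (Finset.Ici_subset_Ici.mpr hab)⟩ : PartLe l) (k.val+1) = ∑ m ∈ Finset.Ici (⟨k.val+1, h⟩ : Fin l), d m from by
            simp only [partExt, dif_pos h]]
      have hins : Finset.Ici k = insert k (Finset.Ici (⟨k.val+1, h⟩ : Fin l)) := by
        ext m
        simp only [Finset.mem_Ici, Finset.mem_insert, Fin.le_def, Fin.ext_iff]
        omega
      have hnot : k ∉ Finset.Ici (⟨k.val+1, h⟩ : Fin l) := by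
        simp [Finset.mem_Ici, Fin.le_def]
      rw [hins, Finset.sum_insert hnot]
      omega
    · rw [show partExt (⟨fun j => ∑ k ∈ Finset.Ici j, d k, fun a b hab => Finset.sum_le_sum_of_subset (Finset.Ici_subset_Ici.mpr hab)⟩ : PartLe l) k.val = ∑ m ∈ Finset.Ici k, d m from by
            simp only [partExt, dif_pos hk],
          show partExt (⟨fun j => ∑ k ∈ Finset.Ici j, d k, fun a b hab => Finset.sum_le_sum_of_subset (Finset.Ici_subset_Ici.mpr hab)⟩ : PartLe l) (k.val+1) = 0 from by
            simp only [partExt, dif_neg (by omega : ¬ (k.val+1 < l))]]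
      have : Finset.Ici k = {k} := by
        ext m
        simp only [Finset.mem_Ici, Finset.mem_singleton, Fin.le_def, Fin.ext_iff]
        omega
      rw [this, Finset.sum_singleton]
      omega
  right_inv p := by
    apply Subtype.ext
    funext j
    show (∑ k ∈ Finset.Ici j, (partExt p k.val - partExt p (k.val+1))) = p.1 j
    have hmap : ∑ k ∈ Finset.Ici j, (partExt p k.val - partExt p (k.val+1))
        = ∑ m ∈ Finset.Icc (j : ℕ) (l-1), (partExt p m - partExt p (m+1)) := by
      rw [show Finset.Icc (j : ℕ) (l-1) = Finset.Ico (j : ℕ) l from by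
        have := j.isLt; ext m; simp only [Finset.mem_Icc, Finset.mem_Ico]; omega]
      rw [← Fin.map_valEmbedding_Ici, Finset.sum_map]
      rfl
    have hl : 1 ≤ l := by have := j.isLt; omega
    have hicc : Finset.Icc (j : ℕ) (l-1) = Finset.Ico (j : ℕ) l := by
      rw [← Finset.Ico_add_one_right_eq_Icc]
      congr 1
      omega
    rw [hmap, hicc,
      telescopeAux (partExt p) (partExt_succ_le p) _ l (by have := j.isLt; omega)]
    have : partExt p l = 0 := by simp [partExt]
    rw [this]
    simp [partExt, j.isLt]

lemma partEquiv_apply {l : ℕ} (d : Fin l → ℕ) (j : Fin l) :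
    ((partEquiv l) d).1 j = ∑ k ∈ Finset.Ici j, d k := rfl

lemma geom_summable_norm : ∀ {n : ℕ} (x : Fin n → ℂ), (∀ k, ‖x k‖ < 1) →
    Summable (fun d : Fin n → ℕ => ‖∏ k, x k ^ d k‖) := by
  intro n
  induction n with
  | zero => intro x hx; exact .of_finite
  | succ n ih =>
    intro x hx
    refine ((Fin.consEquiv (fun _ : Fin (n+1) => ℕ)).summable_iff).mp ?_
    refine Summable.congr
      (f := fun p : ℕ × (Fin n → ℕ) => ‖x 0 ^ p.1‖ * ‖∏ k : Fin n, x k.succ ^ p.2 k‖) ?_ ?_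
    · exact Summable.mul_of_nonneg
        (by simpa only [norm_pow] using
          summable_geometric_of_lt_one (norm_nonneg (x 0)) (hx 0))
        (ih (fun k => x k.succ) (fun k => hx k.succ))
        (fun a => norm_nonneg _) (fun b => norm_nonneg _)
    · intro p
      simp [Fin.prod_univ_succ, norm_mul]

lemma geom_tsum : ∀ {n : ℕ} (x : Fin n → ℂ), (∀ k, ‖x k‖ < 1) →
    ∑' d : Fin n → ℕ, ∏ k, x k ^ d k = ∏ k, (1 - x k)⁻¹ := by
  intro n
  induction n with
  | zero =>
    intro x hx
    simp only [Finset.univ_eq_empty, Finset.prod_empty]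
    exact tsum_eq_single (fun i => 0) (fun b hb => absurd (funext fun k => k.elim0) hb) |>.trans rfl
  | succ n ih =>
    intro x hx
    rw [← (Fin.consEquiv (fun _ : Fin (n+1) => ℕ)).tsum_eq
      (fun d : Fin (n+1) → ℕ => ∏ k, x k ^ d k)]
    have key : ∀ p : ℕ × (Fin n → ℕ),
        (fun d : Fin (n+1) → ℕ => ∏ k, x k ^ d k) (Fin.consEquiv (fun _ => ℕ) p)
          = x 0 ^ p.1 * ∏ k : Fin n, x k.succ ^ p.2 k := by
      intro p
      simp [Fin.prod_univ_succ]
    rw [tsum_congr key]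
    have hf : Summable (fun a : ℕ => ‖x 0 ^ a‖) := by
      simpa only [norm_pow] using
        summable_geometric_of_lt_one (norm_nonneg (x 0)) (hx 0)
    have hg : Summable (fun d : Fin n → ℕ => ‖∏ k : Fin n, x k.succ ^ d k‖) :=
      geom_summable_norm (fun k => x k.succ) (fun k => hx k.succ)
    have hih : ∑' d : Fin n → ℕ, ∏ k : Fin n, x k.succ ^ d k
        = ∏ k : Fin n, (1 - x k.succ)⁻¹ :=
      ih (fun k => x k.succ) (fun k => hx k.succ)
    rw [← tsum_mul_tsum_of_summable_norm (f := fun a : ℕ => x 0 ^ a)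
      (g := fun d : Fin n → ℕ => ∏ k : Fin n, x k.succ ^ d k) hf hg]
    rw [hih, tsum_geometric_of_norm_lt_one (hx 0), Fin.prod_univ_succ]

theorem stmt6 (q t : ℂ) (hq : ‖q‖ < 1) (ht : ‖t‖ < 1) (i l : ℕ)
    (hi : 1 ≤ i) (hil : i ≤ l) :
    ∑' p : PartLe l, q ^ (∑ j, p.1 j) * t ^ (p.1 ⟨i - 1, by omega⟩) =
      1 /
        ((∏ j ∈ Finset.range (i - 1), (1 - q ^ (j + 1))) *
          ∏ j ∈ Finset.Icc i l, (1 - q ^ j * t)) := by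
  classical
  set i0 : Fin l := ⟨i - 1, by omega⟩ with hi0
  set x : Fin l → ℂ := fun k => q ^ (k.val + 1) * (if i0 ≤ k then t else 1) with hxdef
  have hx : ∀ k, ‖x k‖ < 1 := by
    intro k
    rw [hxdef]
    simp only
    split_ifs with h
    · rw [norm_mul, norm_pow]
      have h1 : ‖q‖ ^ (k.val + 1) ≤ 1 :=
        pow_le_one₀ (norm_nonneg q) hq.le
      calc ‖q‖ ^ (k.val + 1) * ‖t‖ ≤ 1 * ‖t‖ :=
            mul_le_mul_of_nonneg_right h1 (norm_nonneg t)
        _ = ‖t‖ := one_mul _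
        _ < 1 := ht
    · rw [mul_one, norm_pow]
      exact pow_lt_one₀ (norm_nonneg q) hq (Nat.succ_ne_zero _)
  rw [← (partEquiv l).tsum_eq]
  have hpt : ∀ d : Fin l → ℕ,
      q ^ (∑ j, ((partEquiv l) d).1 j) * t ^ (((partEquiv l) d).1 i0)
        = ∏ k, x k ^ d k := by
    intro d
    have hsum : ∑ j : Fin l, ((partEquiv l) d).1 j = ∑ k : Fin l, (k.val + 1) * d k := by
      simp only [partEquiv_apply]
      rw [Finset.sum_comm' (s := Finset.univ) (t := fun j => Finset.Ici j)
        (t' := Finset.univ) (s' := fun k => Finset.Iic k)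
        (by intro j k; simp [Finset.mem_Ici, Finset.mem_Iic])]
      refine Finset.sum_congr rfl fun k _ => ?_
      rw [Finset.sum_const, Fin.card_Iic, smul_eq_mul]
    have hi0' : ((partEquiv l) d).1 i0 = ∑ k ∈ Finset.Ici i0, d k := partEquiv_apply d i0
    rw [hsum, hi0']
    rw [← Finset.prod_pow_eq_pow_sum (s := Finset.univ) (f := fun k : Fin l => (k.val+1) * d k)]
    have ht' : t ^ (∑ k ∈ Finset.Ici i0, d k)
        = ∏ k : Fin l, (if i0 ≤ k then t else 1) ^ d k := by
      rw [← Finset.prod_pow_eq_pow_sum]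
      rw [← Finset.prod_filter_mul_prod_filter_not Finset.univ (fun k => i0 ≤ k)
        (fun k => (if i0 ≤ k then t else 1) ^ d k)]
      have h1 : Finset.filter (fun k => i0 ≤ k) Finset.univ = Finset.Ici i0 := by
        ext m; simp [Finset.mem_Ici]
      have h2 : ∏ k ∈ Finset.filter (fun k => ¬ i0 ≤ k) Finset.univ,
          (if i0 ≤ k then t else 1) ^ d k = 1 := by
        refine Finset.prod_eq_one fun k hk => ?_
        rw [Finset.mem_filter] at hk
        rw [if_neg hk.2, one_pow]
      rw [h1, h2, mul_one]
      refine Finset.prod_congr rfl fun k hk => ?_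
      rw [Finset.mem_Ici] at hk
      rw [if_pos hk]
    rw [ht', ← Finset.prod_mul_distrib]
    refine Finset.prod_congr rfl fun k _ => ?_
    rw [hxdef]
    simp only
    rw [mul_pow, pow_mul]
  rw [tsum_congr hpt, geom_tsum x hx]
  rw [Finset.prod_inv_distrib, one_div]
  congr 1
  have hfin : ∏ k : Fin l, (1 - x k)
      = ∏ m ∈ Finset.range l, (1 - q ^ (m + 1) * (if i - 1 ≤ m then t else 1)) := by
    rw [← Fin.prod_univ_eq_prod_range (fun m => 1 - q ^ (m + 1) * (if i - 1 ≤ m then t else 1)) l]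
    refine Finset.prod_congr rfl fun k _ => ?_
    rw [hxdef]
    simp only
    congr 2
  rw [hfin, Finset.range_eq_Ico,
    ← Finset.prod_Ico_consecutive (fun m => 1 - q ^ (m + 1) * (if i - 1 ≤ m then t else 1))
      (Nat.zero_le (i-1)) (by omega : i - 1 ≤ l)]
  congr 1
  · rw [← Finset.range_eq_Ico]
    refine Finset.prod_congr rfl fun m hm => ?_
    rw [Finset.mem_range] at hm
    rw [if_neg (by omega), mul_one]
  · rw [Finset.prod_Ico_eq_prod_range]
    rw [show Finset.Icc i l = Finset.Ico i (l+1) from (Finset.Ico_add_one_right_eq_Icc i l).symm]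
    rw [Finset.prod_Ico_eq_prod_range]
    rw [show l + 1 - i = l - (i - 1) by omega]
    refine Finset.prod_congr rfl fun m hm => ?_
    have hc : i - 1 ≤ i - 1 + m := by omega
    rw [if_pos hc, show i - 1 + m + 1 = i + m by omega]
end
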